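/- Let ℘ be the Weierstrass function of the elliptic curve E : y² = x³ + a₄x + a₆ (so ℘'' = 6℘² + 2a₄), let L, T, k be positive integers with k^{c₂} > (L+T)² for a suitable absolute constant c₂ > 0, and let N be a prime with √L < N < 2√L. Then for every integer 0 ≤ t ≤ T and all 0 ≤ λ₁, λ₂ ≤ L there exists a polynomial Q_{λ₁,λ₂,t} ∈ O_k[X₁, X₂, X₃, X₄] of partial degree in each variable at most L + 2t, whose coefficients have absolute value at most c₁ k^{c₂ t} (c₁ a constant depending only on E), such that (d^t/dz^t)(℘(z)^{λ₁} ℘(Nz)^{λ₂}) = Q_{λ₁,λ₂,t}(℘(z), ℘'(z), ℘(Nz), ℘'(Nz)) identically in z. -/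

import Mathlib

open MvPolynomial Filter

noncomputable section

namespace EllLehmer

/-- The Weierstrass `℘`-function attached to a lattice `Λ ⊆ ℂ`. -/
def wp (Λ : Submodule ℤ ℂ) (z : ℂ) : ℂ :=
  (z ^ 2)⁻¹ + ∑' ω : {ω : Λ // (ω : ℂ) ≠ 0},
    (((z - ((ω : Λ) : ℂ)) ^ 2)⁻¹ - (((ω : Λ) : ℂ) ^ 2)⁻¹)

section Lattice

variable (Λ : Submodule ℤ ℂ) [DiscreteTopology Λ] [IsZLattice ℝ Λ]

omit [IsZLattice ℝ Λ] in
lemma isClosed_coe : IsClosed (Λ : Set ℂ) := by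
  have : DiscreteTopology Λ.toAddSubgroup := ‹DiscreteTopology Λ›
  exact AddSubgroup.isClosed_of_discrete (H := Λ.toAddSubgroup)

lemma summable_inv_cube :
    Summable fun ω : {ω : Λ // (ω : ℂ) ≠ 0} => ‖((ω : Λ) : ℂ)‖⁻¹ ^ 3 := by
  have hfree : Module.Free ℤ Λ := ZLattice.module_free ℝ Λ
  have hcard : Fintype.card (Module.Free.ChooseBasisIndex ℤ Λ) = 2 := by
    rw [← Module.finrank_eq_card_chooseBasisIndex, ZLattice.rank ℝ Λ,
      Complex.finrank_real_complex]
  let e := Fintype.equivFinOfCardEq hcard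
  let b : Module.Basis (Fin 2) ℤ Λ := (Module.Free.chooseBasis ℤ Λ).reindex e
  let bR : Module.Basis (Fin 2) ℝ ℂ := Module.Basis.ofZLatticeBasis ℝ Λ b
  set C : ℝ := max ‖(bR.equivFunL.toContinuousLinearMap : ℂ →L[ℝ] (Fin 2 → ℝ))‖ 1 with hC
  have hC1 : (1:ℝ) ≤ C := le_max_right _ _
  have hC0 : (0:ℝ) < C := lt_of_lt_of_le one_pos hC1
  set g : {ω : Λ // (ω : ℂ) ≠ 0} → (Fin 2 → ℤ) := fun ω i => b.repr ω.1 i with hg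
  have hginj : Function.Injective g := by
    intro x y hxy
    have h1 : b.repr x.1 = b.repr y.1 := by
      ext i; exact congrFun hxy i
    exact Subtype.ext (b.repr.injective h1)
  have hnormg : ∀ ω : {ω : Λ // (ω : ℂ) ≠ 0}, (‖g ω‖ : ℝ) ≤ C * ‖((ω : Λ) : ℂ)‖ := by
    intro ω
    have h1 : bR.equivFun ((ω : Λ) : ℂ) = fun i => ((g ω i : ℝ)) := by
      ext i
      rw [Module.Basis.equivFun_apply]
      exact_mod_cast (Module.Basis.ofZLatticeBasis_repr_apply ℝ Λ b ω.1 i)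
    have h3 : ‖g ω‖ = ‖bR.equivFun ((ω : Λ) : ℂ)‖ := by
      rw [h1]
      simp only [Pi.norm_def, Pi.nnnorm_def]
      congr 1
    rw [h3]
    calc ‖bR.equivFun ((ω : Λ) : ℂ)‖
        = ‖bR.equivFunL.toContinuousLinearMap ((ω : Λ) : ℂ)‖ := rfl
      _ ≤ ‖(bR.equivFunL.toContinuousLinearMap : ℂ →L[ℝ] (Fin 2 → ℝ))‖ * ‖((ω : Λ) : ℂ)‖ :=
          ContinuousLinearMap.le_opNorm _ _
      _ ≤ C * ‖((ω : Λ) : ℂ)‖ :=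
          mul_le_mul_of_nonneg_right (le_max_left _ _) (norm_nonneg _)
  have hg1 : ∀ ω : {ω : Λ // (ω : ℂ) ≠ 0}, (1:ℝ) ≤ ‖g ω‖ := by
    intro ω
    have hne : g ω ≠ 0 := by
      intro h
      apply ω.2
      have h2 : b.repr ω.1 = 0 := by
        ext i
        exact_mod_cast congrFun h i
      have h4 : ω.1 = 0 := by
        apply b.repr.injective; simp [h2]
      simp [h4]
    rcases Function.ne_iff.1 hne with ⟨i, hi⟩
    calc (1:ℝ) ≤ ‖g ω i‖ := by
          rw [Int.norm_eq_abs]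
          exact_mod_cast Int.one_le_abs (by exact_mod_cast hi)
      _ ≤ ‖g ω‖ := norm_le_pi_norm _ i
  have hsum : Summable fun x : Fin 2 → ℤ => ‖x‖ ^ (-(3:ℝ)) :=
    EisensteinSeries.summable_one_div_norm_rpow (by norm_num)
  have hsum2 : Summable fun ω : {ω : Λ // (ω : ℂ) ≠ 0} => ‖g ω‖ ^ (-(3:ℝ)) :=
    hsum.comp_injective hginj
  apply Summable.of_nonneg_of_le (fun ω => by positivity)
    (fun ω => ?_) (hsum2.mul_left (C ^ 3))
  have hω0 : (0:ℝ) < ‖((ω : Λ) : ℂ)‖ := by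
    simpa [norm_pos_iff] using ω.2
  have hgpos : (0:ℝ) < ‖g ω‖ := lt_of_lt_of_le one_pos (hg1 ω)
  have key1 : ‖((ω : Λ) : ℂ)‖⁻¹ ≤ C * ‖g ω‖⁻¹ := by
    have h5 : (C * ‖((ω : Λ) : ℂ)‖)⁻¹ ≤ ‖g ω‖⁻¹ := inv_anti₀ hgpos (hnormg ω)
    calc ‖((ω : Λ) : ℂ)‖⁻¹ = C * (C * ‖((ω : Λ) : ℂ)‖)⁻¹ := by
          rw [mul_inv, ← mul_assoc, mul_inv_cancel₀ (ne_of_gt hC0), one_mul]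
      _ ≤ C * ‖g ω‖⁻¹ := mul_le_mul_of_nonneg_left h5 (le_of_lt hC0)
  have h6 : ‖g ω‖ ^ (-(3:ℝ)) = (‖g ω‖⁻¹) ^ 3 := by
    rw [show ((-(3:ℝ))) = ((-3:ℤ):ℝ) by norm_num, Real.rpow_intCast,
      show ((-3:ℤ)) = -((3:ℕ):ℤ) by rfl, zpow_neg, zpow_natCast, inv_pow]
  rw [h6, ← mul_pow]
  exact pow_le_pow_left₀ (inv_nonneg.2 (le_of_lt hω0)) key1 3

lemma wp_analytic : AnalyticOnNhd ℂ (wp Λ) ((Λ : Set ℂ)ᶜ) := by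
  have hU : IsOpen ((Λ : Set ℂ)ᶜ) := (isClosed_coe Λ).isOpen_compl
  apply DifferentiableOn.analyticOnNhd _ hU
  have h1 : DifferentiableOn ℂ (fun z : ℂ => (z ^ 2)⁻¹) ((Λ : Set ℂ)ᶜ) := by
    intro z hz
    have hz0 : z ≠ 0 := by
      intro h
      exact hz (by simp [h, Submodule.zero_mem])
    exact (((differentiableAt_id.pow 2).inv (pow_ne_zero 2 hz0))).differentiableWithinAt
  have h2 : DifferentiableOn ℂ
      (fun z : ℂ => ∑' ω : {ω : Λ // (ω : ℂ) ≠ 0},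
        (((z - ((ω : Λ) : ℂ)) ^ 2)⁻¹ - (((ω : Λ) : ℂ) ^ 2)⁻¹)) ((Λ : Set ℂ)ᶜ) := by
    set f : {ω : Λ // (ω : ℂ) ≠ 0} → ℂ → ℂ :=
      fun ω z => ((z - ((ω : Λ) : ℂ)) ^ 2)⁻¹ - (((ω : Λ) : ℂ) ^ 2)⁻¹ with hf
    have hdiff : ∀ (s : Finset {ω : Λ // (ω : ℂ) ≠ 0}),
        DifferentiableOn ℂ (fun z => ∑ ω ∈ s, f ω z) ((Λ : Set ℂ)ᶜ) := by
      intro s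
      apply DifferentiableOn.fun_sum
      intro ω _
      intro z hz
      have hzω : z - ((ω : Λ) : ℂ) ≠ 0 := by
        intro h
        apply hz
        have : z = ((ω : Λ) : ℂ) := by linear_combination h
        simp only [Set.mem_compl_iff, SetLike.mem_coe] at *
        rw [this]
        exact (ω : Λ).2
      exact (((((differentiableAt_id (x := z)).sub_const ((ω : Λ) : ℂ)).pow 2).inv
        (pow_ne_zero 2 hzω)).sub_const (((ω : Λ) : ℂ) ^ 2)⁻¹).differentiableWithinAt
    have htlu : TendstoLocallyUniformlyOn
        (fun (s : Finset {ω : Λ // (ω : ℂ) ≠ 0}) z => ∑ ω ∈ s, f ω z)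
        (fun z => ∑' ω, f ω z) atTop ((Λ : Set ℂ)ᶜ) := by
      rw [tendstoLocallyUniformlyOn_iff_forall_isCompact hU]
      intro K hKU hK
      -- distance from K to the lattice
      obtain ⟨δ, hδ0, hδ⟩ := hK.exists_thickening_subset_open hU hKU
      have hdist : ∀ x ∈ K, ∀ w : Λ, δ ≤ ‖x - (w : ℂ)‖ := by
        intro x hx w
        by_contra hlt
        push_neg at hlt
        have : (w : ℂ) ∈ Metric.thickening δ K := by
          rw [Metric.mem_thickening_iff]
          exact ⟨x, hx, by rwa [dist_comm, dist_eq_norm]⟩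
        exact (hδ this) (by simp [SetLike.mem_coe, w.2])
      -- bound on K
      obtain ⟨R₀, hR₀⟩ := hK.isBounded.subset_closedBall 0
      set R : ℝ := max R₀ 1 with hR
      have hR1 : (1:ℝ) ≤ R := le_max_right _ _
      have hxR : ∀ x ∈ K, ‖x‖ ≤ R := by
        intro x hx
        have := hR₀ hx
        simp only [Metric.mem_closedBall, dist_zero_right] at this
        exact this.trans (le_max_left _ _)
      set u : {ω : Λ // (ω : ℂ) ≠ 0} → ℝ := fun ω =>
        12 * R * ‖((ω : Λ) : ℂ)‖⁻¹ ^ 3 +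
          Set.indicator {ω : {ω : Λ // (ω : ℂ) ≠ 0} | ‖((ω : Λ) : ℂ)‖ < 2 * R + 2}
            (fun ω => δ⁻¹ ^ 2 + ‖((ω : Λ) : ℂ)‖⁻¹ ^ 2) ω with hu
      have hSfin : {ω : {ω : Λ // (ω : ℂ) ≠ 0} | ‖((ω : Λ) : ℂ)‖ < 2 * R + 2}.Finite := by
        have hε : (0:ℝ) < (2 * R + 2)⁻¹ ^ 3 := by positivity
        have hev := (summable_inv_cube Λ).tendsto_cofinite_zero.eventually
          (eventually_lt_nhds hε)
        rw [Filter.eventually_cofinite] at hev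
        apply hev.subset
        intro ω hω
        simp only [Set.mem_setOf_eq, not_lt] at *
        have hω0 : (0:ℝ) < ‖((ω : Λ) : ℂ)‖ := by simpa [norm_pos_iff] using ω.2
        have : (2 * R + 2)⁻¹ ≤ ‖((ω : Λ) : ℂ)‖⁻¹ := by
          apply inv_anti₀ hω0 (le_of_lt hω)
        exact pow_le_pow_left₀ (by positivity) this 3
      have husum : Summable u := by
        apply Summable.add ((summable_inv_cube Λ).mul_left _)
        apply summable_of_finite_support
        exact hSfin.subset Set.support_indicator_subset
      apply tendstoUniformlyOn_tsum husum
      intro ω x hx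
      have hω0 : (0:ℝ) < ‖((ω : Λ) : ℂ)‖ := by simpa [norm_pos_iff] using ω.2
      have hd := hdist x hx (ω : Λ)
      have hxω : (0:ℝ) < ‖x - ((ω : Λ) : ℂ)‖ := lt_of_lt_of_le hδ0 hd
      by_cases hsmall : ‖((ω : Λ) : ℂ)‖ < 2 * R + 2
      · -- crude bound
        have hb : ‖f ω x‖ ≤ δ⁻¹ ^ 2 + ‖((ω : Λ) : ℂ)‖⁻¹ ^ 2 := by
          refine (norm_sub_le _ _).trans ?_
          gcongr
          · rw [norm_inv, norm_pow, ← inv_pow]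
            exact pow_le_pow_left₀ (by positivity) (inv_anti₀ hδ0 hd) 2
          · rw [norm_inv, norm_pow, ← inv_pow]
        have h0 : Set.indicator {ω : {ω : Λ // (ω : ℂ) ≠ 0} | ‖((ω : Λ) : ℂ)‖ < 2 * R + 2}
            (fun ω => δ⁻¹ ^ 2 + ‖((ω : Λ) : ℂ)‖⁻¹ ^ 2) ω = δ⁻¹ ^ 2 + ‖((ω : Λ) : ℂ)‖⁻¹ ^ 2 :=
          Set.indicator_of_mem (show ω ∈ {ω : {ω : Λ // (ω : ℂ) ≠ 0} | ‖((ω : Λ) : ℂ)‖ < 2 * R + 2} from hsmall) _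
        have hueq : u ω = 12 * R * ‖((ω : Λ) : ℂ)‖⁻¹ ^ 3 + (δ⁻¹ ^ 2 + ‖((ω : Λ) : ℂ)‖⁻¹ ^ 2) := by
          simp only [hu, h0]
        rw [hueq]
        have : (0:ℝ) ≤ 12 * R * ‖((ω : Λ) : ℂ)‖⁻¹ ^ 3 := by positivity
        linarith
      · push_neg at hsmall
        set w : ℂ := ((ω : Λ) : ℂ)
        have hw0 : w ≠ 0 := ω.2
        have hxw0 : x - w ≠ 0 := by
          intro h; rw [h] at hxω; simp at hxω
        have heq : f ω x = (x * (2 * w - x)) * (((x - w) ^ 2)⁻¹ * (w ^ 2)⁻¹) := by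
          rw [hf]
          show ((x - w) ^ 2)⁻¹ - (w ^ 2)⁻¹ = _
          field_simp
          ring
        have hxle : ‖x‖ ≤ R := hxR x hx
        have h2w : ‖2 * w - x‖ ≤ 3 * ‖w‖ := by
          calc ‖2 * w - x‖ ≤ ‖2 * w‖ + ‖x‖ := norm_sub_le _ _
            _ ≤ 2 * ‖w‖ + R := by
                have h2 : ‖(2:ℂ) * w‖ = 2 * ‖w‖ := by rw [norm_mul]; norm_num
                linarith [hxle, h2.le, h2.ge]
            _ ≤ 3 * ‖w‖ := by linarith [hR1, hsmall]
        have hxwge : ‖w‖ / 2 ≤ ‖x - w‖ := by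
          have h1 : ‖w‖ - ‖x‖ ≤ ‖x - w‖ := by
            have := norm_sub_norm_le w x
            rw [norm_sub_rev x w]
            linarith [abs_le.mp (abs_norm_sub_norm_le w x)]
          nlinarith [hxle, hR1, hsmall]
        have hnorm : ‖f ω x‖ = ‖x‖ * ‖2 * w - x‖ * (‖x - w‖⁻¹ ^ 2 * ‖w‖⁻¹ ^ 2) := by
          rw [heq]
          simp [norm_mul, norm_inv, norm_pow, inv_pow]
        have hinv : ‖x - w‖⁻¹ ≤ 2 * ‖w‖⁻¹ := by
          have h7 := inv_anti₀ (by positivity : (0:ℝ) < ‖w‖/2) hxwge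
          rwa [inv_div, div_eq_mul_inv] at h7
        have h0 : Set.indicator {ω : {ω : Λ // (ω : ℂ) ≠ 0} | ‖((ω : Λ) : ℂ)‖ < 2 * R + 2}
            (fun ω => δ⁻¹ ^ 2 + ‖((ω : Λ) : ℂ)‖⁻¹ ^ 2) ω = 0 :=
          Set.indicator_of_notMem (show ω ∉ {ω : {ω : Λ // (ω : ℂ) ≠ 0} | ‖((ω : Λ) : ℂ)‖ < 2 * R + 2} from not_lt.mpr hsmall) _
        have hueq : u ω = 12 * R * ‖w‖⁻¹ ^ 3 := by
          simp only [hu, h0, add_zero]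
          rfl
        rw [hueq]
        calc ‖f ω x‖ = ‖x‖ * ‖2 * w - x‖ * (‖x - w‖⁻¹ ^ 2 * ‖w‖⁻¹ ^ 2) := hnorm
          _ ≤ R * (3 * ‖w‖) * ((2 * ‖w‖⁻¹) ^ 2 * ‖w‖⁻¹ ^ 2) := by
              have h8 : ‖x - w‖⁻¹ ^ 2 ≤ (2 * ‖w‖⁻¹) ^ 2 :=
                pow_le_pow_left₀ (by positivity) hinv 2
              have h9 : (0:ℝ) ≤ ‖w‖⁻¹ ^ 2 := by positivity
              have hA : ‖x‖ * ‖2 * w - x‖ ≤ R * (3 * ‖w‖) :=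
                mul_le_mul hxle h2w (norm_nonneg _) (by linarith [hR1])
              have hB : ‖x - w‖⁻¹ ^ 2 * ‖w‖⁻¹ ^ 2 ≤ (2 * ‖w‖⁻¹) ^ 2 * ‖w‖⁻¹ ^ 2 :=
                mul_le_mul_of_nonneg_right h8 h9
              exact mul_le_mul hA hB (by positivity) (by positivity)
          _ = 12 * R * ‖w‖⁻¹ ^ 3 := by
              have hww : ‖w‖ * ‖w‖⁻¹ = 1 := mul_inv_cancel₀ (ne_of_gt hω0)
              calc R * (3 * ‖w‖) * ((2 * ‖w‖⁻¹) ^ 2 * ‖w‖⁻¹ ^ 2)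
                  = 12 * R * ((‖w‖ * ‖w‖⁻¹) * ‖w‖⁻¹ ^ 3) := by ring
                _ = 12 * R * ‖w‖⁻¹ ^ 3 := by rw [hww, one_mul]
    exact htlu.differentiableOn (Eventually.of_forall hdiff) hU
  intro z hz
  exact ((h1 z hz).add (h2 z hz)).congr (fun w _ => rfl) rfl

end Lattice

section Algebra

variable {R : Type} [CommRing R]

lemma coeff_pderiv (j : Fin 4) (p : MvPolynomial (Fin 4) R) (m : Fin 4 →₀ ℕ) :
    coeff m (pderiv j p) = ((m j + 1 : ℕ) : R) * coeff (m + Finsupp.single j 1) p := by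
  induction p using MvPolynomial.induction_on' with
  | monomial s a =>
    rw [pderiv_monomial, coeff_monomial, coeff_monomial]
    by_cases h : s = m + Finsupp.single j 1
    · subst h
      rw [if_pos (by rw [add_tsub_cancel_right]), if_pos rfl]
      rw [Finsupp.add_apply, Finsupp.single_eq_same]
      push_cast
      ring
    · rw [if_neg h]
      by_cases h2 : s - Finsupp.single j 1 = m
      · have hsj : s j = 0 := by
          by_contra hne
          apply h
          rw [← h2, tsub_add_cancel_of_le]
          rw [Finsupp.single_le_iff]
          omega
        rw [if_pos h2]
        simp [hsj]
      · rw [if_neg h2, mul_zero]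
  | add p q hp hq => simp [hp, hq, mul_add]

lemma degreeOf_pderiv_le (j i : Fin 4) (p : MvPolynomial (Fin 4) R) :
    degreeOf i (pderiv j p) ≤ degreeOf i p := by
  rw [degreeOf_le_iff]
  intro m hm
  rw [mem_support_iff, coeff_pderiv] at hm
  have h2 : coeff (m + Finsupp.single j 1) p ≠ 0 := right_ne_zero_of_mul hm
  have h3 := monomial_le_degreeOf i (mem_support_iff.mpr h2)
  have h4 : ((m + Finsupp.single j 1 : Fin 4 →₀ ℕ)) i = m i + (Finsupp.single j 1 : Fin 4 →₀ ℕ) i :=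
    Finsupp.add_apply m (Finsupp.single j 1) i
  omega

/-- the values of the derivation on the four variables -/
def fvec (a₄ : R) (n : ℕ) : Fin 4 → MvPolynomial (Fin 4) R :=
  ![X 1, C 6 * X 0 ^ 2 + C (2 * a₄), C (n : R) * X 3,
    C (n : R) * (C 6 * X 2 ^ 2 + C (2 * a₄))]

/-- the derivation -/
def DD (a₄ : R) (n : ℕ) (p : MvPolynomial (Fin 4) R) : MvPolynomial (Fin 4) R :=
  ∑ j : Fin 4, fvec a₄ n j * pderiv j p

lemma DD_C (a₄ : R) (n : ℕ) (a : R) : DD a₄ n (C a) = 0 := by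
  simp [DD, pderiv_C]

lemma DD_add (a₄ : R) (n : ℕ) (p q : MvPolynomial (Fin 4) R) :
    DD a₄ n (p + q) = DD a₄ n p + DD a₄ n q := by
  simp [DD, mul_add, Finset.sum_add_distrib]

lemma DD_mul_X (a₄ : R) (n : ℕ) (p : MvPolynomial (Fin 4) R) (i : Fin 4) :
    DD a₄ n (p * X i) = DD a₄ n p * X i + p * fvec a₄ n i := by
  simp only [DD, pderiv_mul, Fin.sum_univ_four]
  fin_cases i <;>
    simp [pderiv_X_self, pderiv_X_of_ne, Fin.ne_of_val_ne] <;> ring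


variable [Nontrivial R]

lemma degreeOf_fvec_le (a₄ : R) (n : ℕ) (j i : Fin 4) :
    degreeOf i (fvec a₄ n j) ≤ 2 := by
  have hX : ∀ l : Fin 4, degreeOf i (X l : MvPolynomial (Fin 4) R) ≤ 1 := by
    intro l
    rw [degreeOf_X]
    split <;> omega
  have hsq : ∀ l : Fin 4, degreeOf i ((X l : MvPolynomial (Fin 4) R) ^ 2) ≤ 2 := by
    intro l
    rw [pow_two]
    refine le_trans (degreeOf_mul_le _ _ _) ?_
    have := hX l; omega
  have hmid : degreeOf i ((C 6 : MvPolynomial (Fin 4) R) * X 0 ^ 2 + C (2 * a₄)) ≤ 2 := by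
    refine le_trans (degreeOf_add_le _ _ _) (max_le ?_ ?_)
    · exact le_trans (degreeOf_C_mul_le _ _ _) (hsq 0)
    · rw [degreeOf_C]; omega
  have hmid2 : degreeOf i ((C 6 : MvPolynomial (Fin 4) R) * X 2 ^ 2 + C (2 * a₄)) ≤ 2 := by
    refine le_trans (degreeOf_add_le _ _ _) (max_le ?_ ?_)
    · exact le_trans (degreeOf_C_mul_le _ _ _) (hsq 2)
    · rw [degreeOf_C]; omega
  fin_cases j
  · simpa [fvec] using (hX 1).trans (by norm_num)
  · simpa [fvec] using hmid
  · simp only [fvec, Matrix.cons_val_two, Matrix.tail_cons, Matrix.head_cons]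
    exact le_trans (degreeOf_C_mul_le _ _ _) ((hX 3).trans (by norm_num))
  · simp only [fvec, Matrix.cons_val_three, Matrix.tail_cons, Matrix.head_cons]
    exact le_trans (degreeOf_C_mul_le _ _ _) hmid2

lemma degreeOf_DD_le (a₄ : R) (n : ℕ) (p : MvPolynomial (Fin 4) R) (d : ℕ)
    (h : ∀ i, degreeOf i p ≤ d) (i : Fin 4) :
    degreeOf i (DD a₄ n p) ≤ d + 2 := by
  have hterm : ∀ j, degreeOf i (fvec a₄ n j * pderiv j p) ≤ d + 2 := by
    intro j
    refine le_trans (degreeOf_mul_le _ _ _) ?_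
    have := degreeOf_fvec_le a₄ n j i
    have := (degreeOf_pderiv_le j i p).trans (h i)
    omega
  rw [DD, Fin.sum_univ_four]
  refine le_trans (degreeOf_add_le _ _ _) ?_
  refine max_le (le_trans (degreeOf_add_le _ _ _) ?_) (hterm 3)
  refine max_le (le_trans (degreeOf_add_le _ _ _) ?_) (hterm 2)
  exact max_le (hterm 0) (hterm 1)


lemma abs_coeff_DD_le (φ : R →+* ℂ) (a₄ : R) (n : ℕ) (hn : 1 ≤ n)
    (p : MvPolynomial (Fin 4) R) (G : ℕ) (hdeg : ∀ j, degreeOf j p ≤ G) (β : ℝ)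
    (hβ : ∀ m, ‖φ (coeff m p)‖ ≤ β) (m : Fin 4 →₀ ℕ) :
    ‖φ (coeff m (DD a₄ n p))‖ ≤
      (14 * n * (1 + ‖φ a₄‖) * G) * β := by
  set A := ‖φ a₄‖ with hA
  have hA0 : 0 ≤ A := norm_nonneg _
  have hβ0 : 0 ≤ β := le_trans (norm_nonneg _) (hβ 0)
  -- bound for the partial derivatives
  have hpd : ∀ (j : Fin 4) (m' : Fin 4 →₀ ℕ),
      ‖φ (coeff m' (pderiv j p))‖ ≤ G * β := by
    intro j m'
    rw [coeff_pderiv, map_mul, norm_mul, map_natCast, Complex.norm_natCast]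
    by_cases hc : coeff (m' + Finsupp.single j 1) p = 0
    · rw [hc]; simp; positivity
    · have h1 : ((m' + Finsupp.single j 1 : Fin 4 →₀ ℕ)) j ≤ degreeOf j p :=
        monomial_le_degreeOf j (mem_support_iff.mpr hc)
      have h2 : ((m' + Finsupp.single j 1 : Fin 4 →₀ ℕ)) j = m' j + 1 := by
        rw [Finsupp.add_apply, Finsupp.single_eq_same]
      have h3 : (↑(m' j + 1) : ℝ) ≤ (G : ℝ) := by
        rw [h2] at h1
        exact_mod_cast h1.trans (hdeg j)
      exact mul_le_mul h3 (hβ _) (norm_nonneg _) (Nat.cast_nonneg _)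
  -- multiplying by a variable keeps sup bounds
  have habsX : ∀ (q : MvPolynomial (Fin 4) R) (c : ℝ),
      (∀ m', ‖φ (coeff m' q)‖ ≤ c) →
      ∀ (i : Fin 4) (m' : Fin 4 →₀ ℕ), ‖φ (coeff m' (X i * q))‖ ≤ c := by
    intro q c hq i m'
    have hc0 : 0 ≤ c := le_trans (norm_nonneg _) (hq 0)
    rw [coeff_X_mul']
    split
    · exact hq _
    · simpa using hc0
  have h0 : ∀ m', ‖φ (coeff m' (fvec a₄ n 0 * pderiv 0 p))‖ ≤ G * β := by
    intro m'
    have : fvec a₄ n 0 * pderiv 0 p = X 1 * pderiv 0 p := by simp [fvec]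
    rw [this]
    exact habsX _ _ (hpd 0) 1 m'
  have h1 : ∀ m', ‖φ (coeff m' (fvec a₄ n 1 * pderiv 1 p))‖ ≤
      (6 + 2 * A) * (G * β) := by
    intro m'
    have heq : fvec a₄ n 1 * pderiv 1 p =
        C 6 * (X 0 * (X 0 * pderiv 1 p)) + C (2 * a₄) * pderiv 1 p := by
      simp [fvec]; ring
    rw [heq, coeff_add, coeff_C_mul, coeff_C_mul, map_add]
    refine le_trans (norm_add_le _ _) ?_
    rw [map_mul, map_mul, norm_mul, norm_mul]
    have e1 : ‖φ 6‖ = 6 := by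
      rw [map_ofNat]; simp
    have e2 : ‖φ (2 * a₄)‖ ≤ 2 * A := by
      rw [map_mul, norm_mul, map_ofNat]; simp [hA]
    have b1 := habsX _ _ (habsX _ _ (hpd 1) 0) 0 m'
    have b2 := hpd 1 m'
    calc ‖φ 6‖ * ‖φ (coeff m' (X 0 * (X 0 * pderiv 1 p)))‖ +
          ‖φ (2 * a₄)‖ * ‖φ (coeff m' (pderiv 1 p))‖
        ≤ 6 * (G * β) + 2 * A * (G * β) := by
          rw [e1]
          refine add_le_add ?_ ?_
          · exact mul_le_mul_of_nonneg_left b1 (by norm_num)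
          · exact mul_le_mul e2 b2 (norm_nonneg _) (by positivity)
      _ = (6 + 2 * A) * (G * β) := by ring
  have h2 : ∀ m', ‖φ (coeff m' (fvec a₄ n 2 * pderiv 2 p))‖ ≤
      n * (G * β) := by
    intro m'
    have heq : fvec a₄ n 2 * pderiv 2 p = C (n : R) * (X 3 * pderiv 2 p) := by
      simp [fvec]; ring
    rw [heq, coeff_C_mul, map_mul, norm_mul, map_natCast, Complex.norm_natCast]
    exact mul_le_mul_of_nonneg_left (habsX _ _ (hpd 2) 3 m') (Nat.cast_nonneg _)
  have h3 : ∀ m', ‖φ (coeff m' (fvec a₄ n 3 * pderiv 3 p))‖ ≤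
      n * ((6 + 2 * A) * (G * β)) := by
    intro m'
    have heq : fvec a₄ n 3 * pderiv 3 p =
        C (n : R) * (C 6 * (X 2 * (X 2 * pderiv 3 p)) + C (2 * a₄) * pderiv 3 p) := by
      simp [fvec]; ring
    rw [heq, coeff_C_mul, map_mul, norm_mul, map_natCast, Complex.norm_natCast]
    refine mul_le_mul_of_nonneg_left ?_ (Nat.cast_nonneg _)
    rw [coeff_add, coeff_C_mul, coeff_C_mul, map_add]
    refine le_trans (norm_add_le _ _) ?_
    rw [map_mul, map_mul, norm_mul, norm_mul]
    have e1 : ‖φ 6‖ = 6 := by rw [map_ofNat]; simp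
    have e2 : ‖φ (2 * a₄)‖ ≤ 2 * A := by
      rw [map_mul, norm_mul, map_ofNat]; simp [hA]
    have b1 := habsX _ _ (habsX _ _ (hpd 3) 2) 2 m'
    have b2 := hpd 3 m'
    calc ‖φ 6‖ * ‖φ (coeff m' (X 2 * (X 2 * pderiv 3 p)))‖ +
          ‖φ (2 * a₄)‖ * ‖φ (coeff m' (pderiv 3 p))‖
        ≤ 6 * (G * β) + 2 * A * (G * β) := by
          rw [e1]
          refine add_le_add (mul_le_mul_of_nonneg_left b1 (by norm_num))
            (mul_le_mul e2 b2 (norm_nonneg _) (by positivity))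
      _ = (6 + 2 * A) * (G * β) := by ring
  have hsum : coeff m (DD a₄ n p) =
      coeff m (fvec a₄ n 0 * pderiv 0 p) + coeff m (fvec a₄ n 1 * pderiv 1 p) +
      coeff m (fvec a₄ n 2 * pderiv 2 p) + coeff m (fvec a₄ n 3 * pderiv 3 p) := by
    rw [DD, Fin.sum_univ_four, coeff_add, coeff_add, coeff_add]
  rw [hsum, map_add φ, map_add φ, map_add φ]
  have tri : ‖φ (coeff m (fvec a₄ n 0 * pderiv 0 p)) +
      φ (coeff m (fvec a₄ n 1 * pderiv 1 p)) + φ (coeff m (fvec a₄ n 2 * pderiv 2 p)) +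
      φ (coeff m (fvec a₄ n 3 * pderiv 3 p))‖ ≤
      ‖φ (coeff m (fvec a₄ n 0 * pderiv 0 p))‖ +
      ‖φ (coeff m (fvec a₄ n 1 * pderiv 1 p))‖ +
      ‖φ (coeff m (fvec a₄ n 2 * pderiv 2 p))‖ +
      ‖φ (coeff m (fvec a₄ n 3 * pderiv 3 p))‖ :=
    le_trans (norm_add_le _ _) (add_le_add (le_trans (norm_add_le _ _)
      (add_le_add (norm_add_le _ _) le_rfl)) le_rfl)
  refine le_trans tri ?_
  have hGβ : (0:ℝ) ≤ (G:ℝ) * β := by positivity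
  have hn' : (1:ℝ) ≤ (n:ℝ) := by exact_mod_cast hn
  have k1 : (0:ℝ) ≤ ((n:ℝ) - 1) * ((G:ℝ) * β) := mul_nonneg (by linarith) hGβ
  have k2 : (0:ℝ) ≤ A * ((6 * (n:ℝ) - 1) * ((G:ℝ) * β)) :=
    mul_nonneg hA0 (mul_nonneg (by linarith) hGβ)
  nlinarith [h0 m, h1 m, h2 m, h3 m, k1, k2]


end Algebra

section Eval

variable (Λ : Submodule ℤ ℂ) [DiscreteTopology Λ] [IsZLattice ℝ Λ]
variable {R : Type} [CommRing R] (φ : R →+* ℂ) (a₄ : R) (n : ℕ)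

/-- the vector of values -/
def vv (w : ℂ) : Fin 4 → ℂ :=
  ![wp Λ w, deriv (wp Λ) w, wp Λ ((n : ℂ) * w), deriv (wp Λ) ((n : ℂ) * w)]

lemma hasDerivAt_eval₂
    (ha : ∀ z : ℂ, z ∉ Λ → deriv (deriv (wp Λ)) z = 6 * wp Λ z ^ 2 + 2 * φ a₄)
    (p : MvPolynomial (Fin 4) R) (z : ℂ) (hz : z ∉ Λ) (hnz : (n : ℂ) * z ∉ Λ) :
    HasDerivAt (fun w => eval₂ φ (vv Λ n w) p) (eval₂ φ (vv Λ n z) (DD a₄ n p)) z := by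
  have han := wp_analytic Λ
  have hz' : z ∈ ((Λ : Set ℂ))ᶜ := hz
  have hnz' : (n : ℂ) * z ∈ ((Λ : Set ℂ))ᶜ := hnz
  have hwp : ∀ y ∈ ((Λ : Set ℂ))ᶜ, HasDerivAt (wp Λ) (deriv (wp Λ) y) y := fun y hy =>
    ((han y hy).differentiableAt).hasDerivAt
  have hwp' : ∀ y ∈ ((Λ : Set ℂ))ᶜ,
      HasDerivAt (deriv (wp Λ)) (6 * wp Λ y ^ 2 + 2 * φ a₄) y := by
    intro y hy
    have h1 := ((han.deriv y hy).differentiableAt).hasDerivAt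
    rwa [ha y hy] at h1
  have hcm : HasDerivAt (fun w : ℂ => (n : ℂ) * w) (n : ℂ) z := by
    simpa using (hasDerivAt_id z).const_mul (n : ℂ)
  have hv : ∀ i : Fin 4, HasDerivAt (fun w => vv Λ n w i)
      (eval₂ φ (vv Λ n z) (fvec a₄ n i)) z := by
    intro i
    fin_cases i
    · show HasDerivAt (fun w => vv Λ n w 0) (eval₂ φ (vv Λ n z) (fvec a₄ n 0)) z
      simpa [vv, fvec] using hwp z hz'
    · have h1 := hwp' z hz'
      show HasDerivAt (fun w => vv Λ n w 1) (eval₂ φ (vv Λ n z) (fvec a₄ n 1)) z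
      simp only [vv, fvec]
      simp only [Matrix.cons_val_one, Matrix.head_cons, eval₂_add, eval₂_mul, eval₂_C,
        eval₂_pow, eval₂_X, Matrix.cons_val_zero]
      convert h1 using 1
      rw [map_ofNat, map_mul, map_ofNat]
      try ring
    · have h1 := (hwp _ hnz').comp z hcm
      show HasDerivAt (fun w => vv Λ n w 2) (eval₂ φ (vv Λ n z) (fvec a₄ n 2)) z
      simp only [vv, fvec]
      simp only [Matrix.cons_val_two, Matrix.tail_cons, Matrix.head_cons, eval₂_mul,
        eval₂_C, eval₂_X, Matrix.cons_val_three]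
      refine h1.congr_deriv ?_
      rw [map_natCast]
      ring
    · have h1 := (hwp' _ hnz').comp z hcm
      show HasDerivAt (fun w => vv Λ n w 3) (eval₂ φ (vv Λ n z) (fvec a₄ n 3)) z
      simp only [vv, fvec]
      simp only [Matrix.cons_val_three, Matrix.tail_cons, Matrix.head_cons, eval₂_mul,
        eval₂_add, eval₂_C, eval₂_pow, eval₂_X, Matrix.cons_val_two, Matrix.cons_val_zero]
      refine h1.congr_deriv ?_
      rw [map_natCast, map_ofNat, map_mul, map_ofNat]
      ring
  induction p using MvPolynomial.induction_on with
  | C a => simpa [eval₂_C, DD_C] using hasDerivAt_const z (φ a)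
  | add p q hp hq =>
    simp only [DD_add, eval₂_add]
    exact hp.add hq
  | mul_X p i hp =>
    have h2 := hp.mul (hv i)
    simp only [eval₂_mul, eval₂_X]
    rw [DD_mul_X, eval₂_add, eval₂_mul, eval₂_mul, eval₂_X]
    refine h2.congr_deriv ?_
    try ring

lemma iteratedDeriv_eval₂
    (ha : ∀ z : ℂ, z ∉ Λ → deriv (deriv (wp Λ)) z = 6 * wp Λ z ^ 2 + 2 * φ a₄)
    (l₁ l₂ : ℕ) (t : ℕ) :
    ∀ z : ℂ, z ∉ Λ → (n : ℂ) * z ∉ Λ →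
      iteratedDeriv t (fun w => wp Λ w ^ l₁ * wp Λ ((n : ℂ) * w) ^ l₂) z =
        eval₂ φ (vv Λ n z) ((DD a₄ n)^[t] (X 0 ^ l₁ * X 2 ^ l₂)) := by
  induction t with
  | zero =>
    intro z hz hnz
    simp [iteratedDeriv_zero, eval₂_mul, eval₂_pow, eval₂_X, vv]
  | succ t ih =>
    intro z hz hnz
    rw [iteratedDeriv_succ]
    have hU : IsOpen ((Λ : Set ℂ))ᶜ := (isClosed_coe Λ).isOpen_compl
    have hS : IsOpen ((Λ : Set ℂ)ᶜ ∩ (fun w : ℂ => (n : ℂ) * w) ⁻¹' (Λ : Set ℂ)ᶜ) :=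
      hU.inter ((continuous_const.mul continuous_id).isOpen_preimage _ hU)
    have hev : iteratedDeriv t (fun w => wp Λ w ^ l₁ * wp Λ ((n : ℂ) * w) ^ l₂) =ᶠ[nhds z]
        fun w => eval₂ φ (vv Λ n w) ((DD a₄ n)^[t] (X 0 ^ l₁ * X 2 ^ l₂)) := by
      filter_upwards [hS.mem_nhds ⟨hz, hnz⟩] with w hw
      exact ih w hw.1 hw.2
    rw [hev.deriv_eq, Function.iterate_succ_apply']
    exact (hasDerivAt_eval₂ Λ φ a₄ n ha _ z hz hnz).deriv

end Eval

set_option maxHeartbeats 1600000 in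
/-- **Lemma (derivatives of the auxiliary monomials are polynomials with controlled
coefficients).** There is an absolute constant `c₂ > 0` such that: for every CM elliptic
curve `y² = x³ + a₄x + a₆` with complex multiplication by the ring of integers `𝓞 k` of an
imaginary quadratic field `k` (with Weierstrass function `℘ = wp Λ`, satisfying
`℘'' = 6℘² + 2a₄`), there is `c₁ > 0` depending only on the curve such that for all positive
integers `L, T, κ` with `κ ^ c₂ > (L + T)²` and every prime `N` with `√L < N < 2√L`, every
`t ≤ T` and all `λ₁, λ₂ ≤ L`, there is a polynomial `Q ∈ 𝓞 k[X₁, X₂, X₃, X₄]` of partial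
degrees at most `L + 2t`, with coefficients of absolute value at most `c₁ κ^(c₂ t)`, with
`(d/dz)^t (℘(z)^λ₁ ℘(Nz)^λ₂) = Q(℘(z), ℘'(z), ℘(Nz), ℘'(Nz))`. -/
theorem iteratedDeriv_monomial_eq_polynomial :
    ∃ c₂ : ℝ, 0 < c₂ ∧
      ∀ (k : Type) [Field k] [NumberField k],
        Module.finrank ℚ k = 2 → IsEmpty (k →+* ℝ) →
        ∀ (ι : k →+* ℂ) (Λ : Submodule ℤ ℂ) (_ : DiscreteTopology Λ) (_ : IsZLattice ℝ Λ)
          (a₄ a₆ : NumberField.RingOfIntegers k),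
        -- `Λ` is stable under `𝓞 k`: complex multiplication by `𝓞 k`
        (∀ α : NumberField.RingOfIntegers k, ∀ ω ∈ Λ,
          ι (algebraMap (NumberField.RingOfIntegers k) k α) * ω ∈ Λ) →
        -- `℘` is the Weierstrass function of `E : y² = x³ + a₄x + a₆`, so `℘'' = 6℘² + 2a₄`
        (∀ z : ℂ, z ∉ Λ → iteratedDeriv 2 (wp Λ) z =
          6 * wp Λ z ^ 2 + 2 * ι (algebraMap (NumberField.RingOfIntegers k) k a₄)) →
        ∃ c₁ : ℝ, 0 < c₁ ∧
          ∀ L T κ : ℕ, 0 < L → 0 < T → 0 < κ →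
            ((L : ℝ) + T) ^ 2 < (κ : ℝ) ^ c₂ →
            ∀ N : ℕ, N.Prime → Real.sqrt L < N → (N : ℝ) < 2 * Real.sqrt L →
            ∀ t : ℕ, t ≤ T → ∀ l₁ l₂ : ℕ, l₁ ≤ L → l₂ ≤ L →
              ∃ Q : MvPolynomial (Fin 4) (NumberField.RingOfIntegers k),
                (∀ i : Fin 4, Q.degreeOf i ≤ L + 2 * t) ∧
                (∀ m : Fin 4 →₀ ℕ, ‖ι (algebraMap (NumberField.RingOfIntegers k) k (MvPolynomial.coeff m Q))‖
                  ≤ c₁ * (κ : ℝ) ^ (c₂ * t)) ∧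
                ∀ z : ℂ, z ∉ Λ → (N : ℂ) * z ∉ Λ →
                  iteratedDeriv t (fun w => wp Λ w ^ l₁ * wp Λ ((N : ℂ) * w) ^ l₂) z =
                    MvPolynomial.eval₂
                      ((ι.comp (algebraMap (NumberField.RingOfIntegers k) k)))
                      ![wp Λ z, deriv (wp Λ) z, wp Λ ((N : ℂ) * z), deriv (wp Λ) ((N : ℂ) * z)]
                      Q := by
  refine ⟨2, by norm_num, ?_⟩
  intro k _ _ _ _ ι Λ hdisc hlat a₄ a₆ hCM hwpp
  haveI := hdisc
  haveI := hlat
  set φ : NumberField.RingOfIntegers k →+* ℂ :=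
    ι.comp (algebraMap (NumberField.RingOfIntegers k) k) with hφ
  set A : ℝ := ‖φ a₄‖ with hAdef
  have hA0 : 0 ≤ A := norm_nonneg _
  set M : ℝ := 1 + A with hMdef
  have hM1 : (1:ℝ) ≤ M := by rw [hMdef]; linarith
  set K₀ : ℝ := 3136 * M ^ 2 with hK₀def
  have hK₀1 : (1:ℝ) ≤ K₀ := by rw [hK₀def]; nlinarith
  set c₁ : ℝ := max 1 ((112 * M * K₀ ^ 2) ^ Nat.ceil K₀) with hc₁def
  have hc₁pos : (0:ℝ) < c₁ := lt_of_lt_of_le one_pos (le_max_left _ _)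
  refine ⟨c₁, hc₁pos, ?_⟩
  intro L T κ hL hT hκ hLTκ N hNp hN1 hN2 t ht l₁ l₂ hl₁ hl₂
  have ha : ∀ z : ℂ, z ∉ Λ → deriv (deriv (wp Λ)) z = 6 * wp Λ z ^ 2 + 2 * φ a₄ := by
    intro z hz
    have h := hwpp z hz
    rwa [iteratedDeriv_succ, iteratedDeriv_one] at h
  have hN1' : 1 ≤ N := hNp.one_lt.le
  -- the base polynomial and its iterates
  set Q₀ : MvPolynomial (Fin 4) (NumberField.RingOfIntegers k) := X 0 ^ l₁ * X 2 ^ l₂ with hQ₀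
  have hQ₀m : Q₀ = monomial (Finsupp.single (0 : Fin 4) l₁ + Finsupp.single (2 : Fin 4) l₂)
      (1 : NumberField.RingOfIntegers k) := by
    rw [hQ₀, X_pow_eq_monomial, X_pow_eq_monomial, monomial_mul, one_mul]
  -- degree bounds
  have hdeg : ∀ s : ℕ, ∀ i : Fin 4, degreeOf i ((DD a₄ N)^[s] Q₀) ≤ L + 2 * s := by
    intro s
    induction s with
    | zero =>
      intro i
      simp only [Function.iterate_zero, id_eq]
      rw [hQ₀m, degreeOf_le_iff]
      intro m hm
      have hsupp : m ∈ ({Finsupp.single (0 : Fin 4) l₁ + Finsupp.single (2 : Fin 4) l₂} :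
          Finset (Fin 4 →₀ ℕ)) := support_monomial_subset hm
      rw [Finset.mem_singleton] at hsupp
      subst hsupp
      rw [Finsupp.add_apply]
      fin_cases i <;> simp [Finsupp.single_apply] <;> omega
    | succ s ihs =>
      intro i
      rw [Function.iterate_succ_apply']
      have h2 := degreeOf_DD_le a₄ N _ (L + 2 * s) ihs i
      omega
  -- coefficient bounds
  set G : ℕ := L + 2 * T with hGdef
  set B : ℝ := 14 * N * M * G with hBdef
  have hB0 : (0:ℝ) ≤ B := by
    rw [hBdef]
    have : (0:ℝ) ≤ M := by linarith
    positivity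
  have hcoeff : ∀ s : ℕ, s ≤ T → ∀ m : Fin 4 →₀ ℕ,
      ‖φ (coeff m ((DD a₄ N)^[s] Q₀))‖ ≤ B ^ s := by
    intro s
    induction s with
    | zero =>
      intro _ m
      simp only [Function.iterate_zero, id_eq, pow_zero]
      rw [hQ₀m, coeff_monomial]
      split
      · simp
      · simp
    | succ s ihs =>
      intro hsT m
      rw [Function.iterate_succ_apply']
      have h1 := abs_coeff_DD_le φ a₄ N hN1' ((DD a₄ N)^[s] Q₀) G
        (fun j => le_trans (hdeg s j) (by omega)) (B ^ s) (ihs (by omega)) m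
      refine le_trans h1 (le_of_eq ?_)
      rw [pow_succ, hBdef, hMdef, hAdef]
      ring
  -- arithmetic on the constants
  have hLT0 : (0:ℝ) ≤ (L:ℝ) + T := by positivity
  have hκpos : (0:ℝ) < κ := by exact_mod_cast hκ
  have hκ1 : (1:ℝ) ≤ κ := by exact_mod_cast hκ
  have hκ2 : ((L:ℝ) + T) ^ 2 < (κ:ℝ) ^ (2:ℕ) := by
    have h3 : ((κ:ℝ) ^ (2:ℝ)) = (κ:ℝ) ^ (2:ℕ) := by
      rw [← Real.rpow_natCast (κ:ℝ) 2]; norm_num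
    rwa [h3] at hLTκ
  have hLTκ' : (L:ℝ) + T < κ := lt_of_pow_lt_pow_left₀ 2 hκpos.le hκ2
  have hL0 : (0:ℝ) ≤ L := by positivity
  have hT0 : (0:ℝ) ≤ T := by positivity
  have hNsq : (N:ℝ) ^ 2 ≤ 4 * L := by
    nlinarith [Real.sq_sqrt (show (0:ℝ) ≤ (L:ℝ) by positivity),
      Real.sqrt_nonneg (L:ℝ), hN2]
  have hNR1 : (1:ℝ) ≤ (N:ℝ) := by exact_mod_cast hN1'
  have hNN : (N:ℝ) ≤ (N:ℝ) ^ 2 := by nlinarith [hNR1]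
  have hNle : (N:ℝ) ≤ 4 * ((L:ℝ) + T) := by linarith
  have hNsq' : (N:ℝ) ^ 2 ≤ 4 * ((L:ℝ) + T) := by linarith
  have hGle : (G:ℝ) ≤ 2 * ((L:ℝ) + T) := by
    rw [hGdef]; push_cast; linarith
  have hG0 : (0:ℝ) ≤ (G:ℝ) := by positivity
  have hGsq : (G:ℝ) ^ 2 ≤ 4 * ((L:ℝ) + T) ^ 2 := by nlinarith
  have hBsq : B ^ 2 ≤ K₀ * ((L:ℝ) + T) ^ 3 := by
    calc B ^ 2 = 196 * ((N:ℝ) ^ 2 * (G:ℝ) ^ 2) * M ^ 2 := by rw [hBdef]; ring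
      _ ≤ 196 * ((4 * ((L:ℝ) + T)) * (4 * ((L:ℝ) + T) ^ 2)) * M ^ 2 := by
          refine mul_le_mul_of_nonneg_right
            (mul_le_mul_of_nonneg_left ?_ (by norm_num)) (by positivity)
          exact mul_le_mul hNsq' hGsq (by positivity) (by positivity)
      _ = K₀ * ((L:ℝ) + T) ^ 3 := by rw [hK₀def]; ring
  -- the final bound on B ^ t
  have hBt : B ^ t ≤ c₁ * ((κ:ℝ) ^ (2:ℕ)) ^ t := by
    by_cases hcase : K₀ ≤ (κ:ℝ)
    · have hcube : ((L:ℝ) + T) ^ 3 ≤ (κ:ℝ) ^ 3 := pow_le_pow_left₀ hLT0 hLTκ'.le 3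
      have h7 : K₀ * ((L:ℝ) + T) ^ 3 ≤ (κ:ℝ) * (κ:ℝ) ^ 3 :=
        mul_le_mul hcase hcube (by positivity) hκpos.le
      have h9 : B ^ 2 ≤ ((κ:ℝ) ^ (2:ℕ)) ^ 2 := by
        calc B ^ 2 ≤ K₀ * ((L:ℝ) + T) ^ 3 := hBsq
          _ ≤ (κ:ℝ) * (κ:ℝ) ^ 3 := h7
          _ = ((κ:ℝ) ^ (2:ℕ)) ^ 2 := by ring
      have hB2 : B ≤ (κ:ℝ) ^ (2:ℕ) := by
        have h10 : (0:ℝ) ≤ (κ:ℝ) ^ (2:ℕ) := by positivity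
        have h11 := Real.sqrt_le_sqrt h9
        rwa [Real.sqrt_sq hB0, Real.sqrt_sq h10] at h11
      calc B ^ t ≤ ((κ:ℝ) ^ (2:ℕ)) ^ t := pow_le_pow_left₀ hB0 hB2 t
        _ ≤ c₁ * ((κ:ℝ) ^ (2:ℕ)) ^ t :=
            le_mul_of_one_le_left (by positivity) (le_max_left _ _)
    · push_neg at hcase
      have h3 : ((L:ℝ) + T) ^ 2 ≤ K₀ ^ 2 := pow_le_pow_left₀ hLT0 (by linarith) 2
      have hBle : B ≤ 112 * M * K₀ ^ 2 := by
        have hM0 : (0:ℝ) ≤ M := by linarith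
        calc B = 14 * (N:ℝ) * M * (G:ℝ) := by rw [hBdef]
          _ ≤ 14 * (4 * ((L:ℝ) + T)) * M * (2 * ((L:ℝ) + T)) := by
              refine mul_le_mul (mul_le_mul_of_nonneg_right
                (mul_le_mul_of_nonneg_left hNle (by norm_num)) hM0) hGle hG0 ?_
              positivity
          _ = 112 * M * ((L:ℝ) + T) ^ 2 := by ring
          _ ≤ 112 * M * K₀ ^ 2 := by nlinarith
      have htceil : t ≤ Nat.ceil K₀ := by
        have h4 : (t:ℝ) ≤ (T:ℝ) := by exact_mod_cast ht
        have h5 : (t:ℝ) ≤ K₀ := by linarith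
        exact_mod_cast le_trans h5 (Nat.le_ceil K₀)
      have hbase1 : (1:ℝ) ≤ 112 * M * K₀ ^ 2 := by nlinarith
      calc B ^ t ≤ (112 * M * K₀ ^ 2) ^ t := pow_le_pow_left₀ hB0 hBle t
        _ ≤ (112 * M * K₀ ^ 2) ^ Nat.ceil K₀ := pow_le_pow_right₀ hbase1 htceil
        _ ≤ c₁ := le_max_right _ _
        _ ≤ c₁ * ((κ:ℝ) ^ (2:ℕ)) ^ t := by
            refine le_mul_of_one_le_right hc₁pos.le (one_le_pow₀ ?_)
            nlinarith
  have hrw : (κ:ℝ) ^ ((2:ℝ) * (t:ℕ)) = ((κ:ℝ) ^ (2:ℕ)) ^ t := by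
    rw [show (2:ℝ) * (t:ℕ) = ((2 * t : ℕ) : ℝ) by push_cast; ring,
      Real.rpow_natCast, pow_mul]
  refine ⟨(DD a₄ N)^[t] Q₀, fun i => hdeg t i, ?_, ?_⟩
  · intro m
    refine le_trans (hcoeff t ht m) ?_
    rw [hrw]
    exact hBt
  · intro z hz hnz
    exact iteratedDeriv_eval₂ Λ φ a₄ N ha l₁ l₂ t z hz hnz
end EllLehmer
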